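/- Suppose that for every integer n > 2 there is a prime q such that 2n − q and p_{q+2} + 2 are both prime. Then there are infinitely many primes q such that p_{q+2} + 2 is prime; in particular, there are infinitely many twin prime pairs. -/
import Mathlib


/-- `nthPrime n` is the `n`-th prime `p_n`, so that `p_1 = 2`, `p_2 = 3`, etc. -/
noncomputable def nthPrime (n : ℕ) : ℕ := Nat.nth Nat.Prime (n - 1)

theorem conj_3_1_implies_twin_primes
    (h : ∀ n : ℕ, 2 < n → ∃ q : ℕ, q.Prime ∧ (2 * n - q).Prime ∧
      (nthPrime (q + 2) + 2).Prime) :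
    {q : ℕ | q.Prime ∧ (nthPrime (q + 2) + 2).Prime}.Infinite ∧
      {p : ℕ | p.Prime ∧ (p + 2).Prime}.Infinite := by
  set S : Set ℕ := {q : ℕ | q.Prime ∧ (nthPrime (q + 2) + 2).Prime} with hS
  have hSinf : S.Infinite := by
    by_contra hfin
    rw [Set.not_infinite] at hfin
    set F := hfin.toFinset with hF
    set P := ∏ q ∈ F, q with hP
    have hP1 : 1 ≤ P := by
      apply Finset.one_le_prod'
      intro i hi
      have : i.Prime := (hfin.mem_toFinset.mp hi).1
      exact this.one_lt.le.trans' (by norm_num)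
    have hn : 2 < 3 * P := by nlinarith
    obtain ⟨q, hq, hq2, hq3⟩ := h (3 * P) hn
    have hqS : q ∈ F := hfin.mem_toFinset.mpr ⟨hq, hq3⟩
    have hqP : q ≤ P := Finset.single_le_prod' (fun i hi =>
      ((hfin.mem_toFinset.mp hi).1.one_lt.le.trans' (by norm_num))) hqS
    have hdvdP : q ∣ P := Finset.dvd_prod_of_mem _ hqS
    have h6 : (2 : ℕ) * (3 * P) = 6 * P := by ring
    have hdvd : q ∣ 2 * (3 * P) - q := by
      rw [h6]; exact Nat.dvd_sub (hdvdP.mul_left 6) dvd_rfl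
    have hbig : q < 2 * (3 * P) - q := by
      have : 6 * q ≤ 6 * P := by omega
      omega
    have := (Nat.prime_dvd_prime_iff_eq hq hq2).mp hdvd
    omega
  refine ⟨hSinf, ?_⟩
  have hinj : Function.Injective (fun q : ℕ => nthPrime (q + 2)) := by
    intro a b hab
    have := Nat.nth_injective Nat.infinite_setOf_prime
      (show Nat.nth Nat.Prime (a + 1) = Nat.nth Nat.Prime (b + 1) from hab)
    omega
  have himg : (fun q : ℕ => nthPrime (q + 2)) '' S ⊆ {p : ℕ | p.Prime ∧ (p + 2).Prime} := by
    rintro p ⟨q, hq, rfl⟩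
    exact ⟨Nat.prime_nth_prime _, hq.2⟩
  exact Set.Infinite.mono himg (hSinf.image (hinj.injOn))
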